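/- Let S ⊆ [m] × [n] be a finite set such that the bipartite graph G_S is doubly chordal bipartite, and let C = A_1 × B_0 ∈ Int(S). Define recursively, for k ≥ 2, A_k = { i ∈ [m] : i ∉ A_{k−1} and there exists j ∈ B_{k−1} with (i,j) ∈ S }, and, for k ≥ 1, B_k = { j ∈ [n] : j ∉ B_{k−1} and there exists i ∈ A_k with (i,j) ∈ S }. Then A_k and B_k are empty for all sufficiently large k, and the indicator vector of C satisfies 𝟙_C = Σ_{k≥1} ( Σ_{i ∈ A_k} a_i − Σ_{j ∈ B_k} b_j ) in ℝ^S, where a_i and b_j are the rows of the matrix A_S. -/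

import Mathlib

/-- A clique in `S ⊆ [m] × [n]` is a nonempty subset of `S` of the form `R × C`. -/
def IsCliqueIn {m n : ℕ} (S D : Finset (Fin m × Fin n)) : Prop :=
  D.Nonempty ∧ D ⊆ S ∧ ∃ (R : Finset (Fin m)) (C : Finset (Fin n)), D = R ×ˢ C

/-- A maximal clique of `S`, i.e. an element of `Max(S)`. -/
def IsMaxCliqueIn {m n : ℕ} (S D : Finset (Fin m × Fin n)) : Prop :=
  IsCliqueIn S D ∧ ∀ E, IsCliqueIn S E → D ⊆ E → D = E

/-- A nonempty intersection of two distinct maximal cliques of `S`. -/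
def IsPairIntersection {m n : ℕ} (S C : Finset (Fin m × Fin n)) : Prop :=
  ∃ D E, IsMaxCliqueIn S D ∧ IsMaxCliqueIn S E ∧ D ≠ E ∧ C = D ∩ E ∧ C.Nonempty

/-- An element of `Int(S)`: a containment-maximal pairwise intersection of maximal cliques. -/
def IsMaxIntersection {m n : ℕ} (S C : Finset (Fin m × Fin n)) : Prop :=
  IsPairIntersection S C ∧ ∀ C', IsPairIntersection S C' → C ⊆ C' → C = C'

/-- The bipartite graph `G_S` on `[m] ⊔ [n]` with an edge `i ~ j` iff `(i,j) ∈ S`. -/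
def graphOf {m n : ℕ} (S : Finset (Fin m × Fin n)) : SimpleGraph (Fin m ⊕ Fin n) :=
  SimpleGraph.fromRel fun u v => ∃ p ∈ S, u = Sum.inl p.1 ∧ v = Sum.inr p.2

/-- The cycle graph on `ℓ` vertices. -/
def cycleGraph (ℓ : ℕ) : SimpleGraph (ZMod ℓ) :=
  SimpleGraph.fromRel fun u v => v = u + 1

/-- The double square graph: two 4-cycles glued along a common edge. -/
def doubleSquare : SimpleGraph (Fin 3 ⊕ Fin 3) :=
  SimpleGraph.fromRel fun u v =>
    (u, v) ∈ ([(Sum.inl 0, Sum.inr 0), (Sum.inl 0, Sum.inr 1), (Sum.inl 1, Sum.inr 0),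
      (Sum.inl 1, Sum.inr 1), (Sum.inl 1, Sum.inr 2), (Sum.inl 2, Sum.inr 1),
      (Sum.inl 2, Sum.inr 2)] : List ((Fin 3 ⊕ Fin 3) × (Fin 3 ⊕ Fin 3)))

/-- `G` contains an induced copy of `H`. -/
def HasInducedCopy {V W : Type*} (H : SimpleGraph V) (G : SimpleGraph W) : Prop :=
  ∃ f : V → W, Function.Injective f ∧ ∀ u v, H.Adj u v ↔ G.Adj (f u) (f v)

/-- A graph is doubly chordal bipartite if it has no induced cycle of length at least 6 and
no induced double square. -/
def DoublyChordalBipartite {V : Type*} (G : SimpleGraph V) : Prop :=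
  (∀ ℓ : ℕ, 6 ≤ ℓ → ¬ HasInducedCopy (cycleGraph ℓ) G) ∧ ¬ HasInducedCopy doubleSquare G


open Sum Finset

variable {m n : ℕ}

lemma graphOf_adj_inl_inr {S : Finset (Fin m × Fin n)} {i : Fin m} {j : Fin n} :
    (graphOf S).Adj (inl i) (inr j) ↔ (i, j) ∈ S := by
  simp only [graphOf, SimpleGraph.fromRel_adj]
  constructor
  · rintro ⟨-, ⟨p, hp, h1, h2⟩ | ⟨p, hp, h1, h2⟩⟩
    · cases h1; cases h2; simpa using hp
    · exact absurd h1 (by simp)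
  · intro h
    exact ⟨by simp, Or.inl ⟨(i, j), h, rfl, rfl⟩⟩

lemma graphOf_adj_inr_inl {S : Finset (Fin m × Fin n)} {i : Fin m} {j : Fin n} :
    (graphOf S).Adj (inr j) (inl i) ↔ (i, j) ∈ S := by
  rw [SimpleGraph.adj_comm]; exact graphOf_adj_inl_inr

lemma graphOf_not_adj_inl_inl {S : Finset (Fin m × Fin n)} {i i' : Fin m} :
    ¬ (graphOf S).Adj (inl i) (inl i') := by
  simp only [graphOf, SimpleGraph.fromRel_adj]
  rintro ⟨-, ⟨p, hp, h1, h2⟩ | ⟨p, hp, h1, h2⟩⟩ <;> simp at h2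

lemma graphOf_not_adj_inr_inr {S : Finset (Fin m × Fin n)} {j j' : Fin n} :
    ¬ (graphOf S).Adj (inr j) (inr j') := by
  simp only [graphOf, SimpleGraph.fromRel_adj]
  rintro ⟨-, ⟨p, hp, h1, h2⟩ | ⟨p, hp, h1, h2⟩⟩ <;> simp at h1

lemma ds_free {S : Finset (Fin m × Fin n)}
    (hG2 : ¬ HasInducedCopy doubleSquare (graphOf S))
    (a1 a2 a3 : Fin m) (b1 b2 b3 : Fin n)
    (ha12 : a1 ≠ a2) (ha13 : a1 ≠ a3) (ha23 : a2 ≠ a3)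
    (hb12 : b1 ≠ b2) (hb13 : b1 ≠ b3) (hb23 : b2 ≠ b3)
    (e11 : (a1, b1) ∈ S) (e12 : (a1, b2) ∈ S) (e21 : (a2, b1) ∈ S)
    (e22 : (a2, b2) ∈ S) (e23 : (a2, b3) ∈ S) (e32 : (a3, b2) ∈ S)
    (e33 : (a3, b3) ∈ S) (ne13 : (a1, b3) ∉ S) (ne31 : (a3, b1) ∉ S) : False := by
  apply hG2
  have ha21 := ha12.symm; have ha31 := ha13.symm; have ha32 := ha23.symm
  have hb21 := hb12.symm; have hb31 := hb13.symm; have hb32 := hb23.symm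
  have ha : ∀ u v : Fin 3, ![a1, a2, a3] u = ![a1, a2, a3] v → u = v := by
    intro u v; fin_cases u <;> fin_cases v <;> simp_all
  have hb : ∀ u v : Fin 3, ![b1, b2, b3] u = ![b1, b2, b3] v → u = v := by
    intro u v; fin_cases u <;> fin_cases v <;> simp_all
  refine ⟨Sum.elim (fun k => inl (![a1, a2, a3] k)) (fun k => inr (![b1, b2, b3] k)), ?_, ?_⟩
  · rintro (u | u) (v | v) h <;> simp only [Sum.elim_inl, Sum.elim_inr] at h
    · rw [ha u v (by injection h)]
    · exact absurd h (by simp)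
    · exact absurd h (by simp)
    · rw [hb u v (by injection h)]
  · intro u v
    simp only [doubleSquare, SimpleGraph.fromRel_adj]
    rcases u with u | u <;> rcases v with v | v <;>
      simp only [Sum.elim_inl, Sum.elim_inr, graphOf_adj_inl_inr, graphOf_adj_inr_inl]
    · constructor
      · rintro ⟨-, h | h⟩ <;> simp at h
      · intro h; exact absurd h graphOf_not_adj_inl_inl
    · fin_cases u <;> fin_cases v <;>
        simp only [Matrix.cons_val_zero, Matrix.cons_val_one, Matrix.head_cons,
          Matrix.cons_val_two, Matrix.tail_cons] <;>
        first
          | (refine iff_of_true (by simp) ?_; assumption)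
          | (refine iff_of_false (by simp) ?_; assumption)
    · fin_cases u <;> fin_cases v <;>
        simp only [Matrix.cons_val_zero, Matrix.cons_val_one, Matrix.head_cons,
          Matrix.cons_val_two, Matrix.tail_cons] <;>
        first
          | (refine iff_of_true (by simp) ?_; assumption)
          | (refine iff_of_false (by simp) ?_; assumption)
    · constructor
      · rintro ⟨-, h | h⟩ <;> simp at h
      · intro h; exact absurd h graphOf_not_adj_inr_inr

lemma prod_eq_prod {R R' : Finset (Fin m)} {C C' : Finset (Fin n)}
    (h : R ×ˢ C = R' ×ˢ C') (hne : (R ×ˢ C).Nonempty) : R = R' ∧ C = C' := by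
  obtain ⟨⟨a, b⟩, hab⟩ := hne
  rw [Finset.mem_product] at hab
  have hab' := hab
  have h1 : (a, b) ∈ R' ×ˢ C' := h ▸ Finset.mem_product.2 hab
  rw [Finset.mem_product] at h1
  constructor
  · ext x
    constructor
    · intro hx
      have : (x, b) ∈ R' ×ˢ C' := h ▸ Finset.mem_product.2 ⟨hx, hab.2⟩
      exact (Finset.mem_product.1 this).1
    · intro hx
      have : (x, b) ∈ R ×ˢ C := h ▸ Finset.mem_product.2 ⟨hx, h1.2⟩
      exact (Finset.mem_product.1 this).1
  · ext y
    constructor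
    · intro hy
      have : (a, y) ∈ R' ×ˢ C' := h ▸ Finset.mem_product.2 ⟨hab.1, hy⟩
      exact (Finset.mem_product.1 this).2
    · intro hy
      have : (a, y) ∈ R ×ˢ C := h ▸ Finset.mem_product.2 ⟨h1.1, hy⟩
      exact (Finset.mem_product.1 this).2

lemma exists_maxclique_aux {S : Finset (Fin m × Fin n)} :
    ∀ (t : ℕ) (D : Finset (Fin m × Fin n)), S.card - D.card ≤ t → IsCliqueIn S D →
      ∃ F, D ⊆ F ∧ IsMaxCliqueIn S F := by
  intro t
  induction t with
  | zero =>
    intro D hcard hD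
    have hDS : D = S := Finset.eq_of_subset_of_card_le hD.2.1 (by omega)
    refine ⟨D, Finset.Subset.refl D, hD, fun E hE hDE => ?_⟩
    exact Finset.Subset.antisymm hDE (hDS ▸ hE.2.1)
  | succ t ih =>
    intro D hcard hD
    by_cases hmax : ∀ E, IsCliqueIn S E → D ⊆ E → D = E
    · exact ⟨D, Finset.Subset.refl D, hD, hmax⟩
    · push_neg at hmax
      obtain ⟨E, hE, hDE, hne⟩ := hmax
      have hlt : D.card < E.card := Finset.card_lt_card (Finset.ssubset_iff_subset_ne.2 ⟨hDE, hne⟩)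
      obtain ⟨F, hEF, hF⟩ := ih E (by have := Finset.card_le_card hE.2.1; omega) hE
      exact ⟨F, hDE.trans hEF, hF⟩

lemma exists_maxclique {S D : Finset (Fin m × Fin n)} (hD : IsCliqueIn S D) :
    ∃ F, D ⊆ F ∧ IsMaxCliqueIn S F :=
  exists_maxclique_aux (S.card - D.card) D le_rfl hD

/-- If `x` is adjacent to every column of a maximal clique `R ×ˢ C`, then `x ∈ R`. -/
lemma row_mem_of_max {S : Finset (Fin m × Fin n)} {R : Finset (Fin m)} {C : Finset (Fin n)}
    (hmax : IsMaxCliqueIn S (R ×ˢ C)) (x : Fin m) (hx : ∀ y ∈ C, (x, y) ∈ S) : x ∈ R := by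
  obtain ⟨⟨hne, hsub, -⟩, hm⟩ := hmax
  have hCne : C.Nonempty := by
    obtain ⟨⟨a, b⟩, hab⟩ := hne
    exact ⟨b, (Finset.mem_product.1 hab).2⟩
  have hclique : IsCliqueIn S ((insert x R) ×ˢ C) := by
    refine ⟨?_, ?_, insert x R, C, rfl⟩
    · obtain ⟨b, hb⟩ := hCne
      exact ⟨(x, b), Finset.mem_product.2 ⟨Finset.mem_insert_self x R, hb⟩⟩
    · intro ⟨a, b⟩ hab
      rw [Finset.mem_product] at hab
      rcases Finset.mem_insert.1 hab.1 with rfl | ha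
      · exact hx b hab.2
      · exact hsub (Finset.mem_product.2 ⟨ha, hab.2⟩)
  have heq := hm _ hclique (Finset.product_subset_product (Finset.subset_insert x R) le_rfl)
  obtain ⟨b, hb⟩ := hCne
  have : (x, b) ∈ R ×ˢ C := heq ▸ Finset.mem_product.2 ⟨Finset.mem_insert_self x R, hb⟩
  exact (Finset.mem_product.1 this).1

/-- If `y` is adjacent to every row of a maximal clique `R ×ˢ C`, then `y ∈ C`. -/
lemma col_mem_of_max {S : Finset (Fin m × Fin n)} {R : Finset (Fin m)} {C : Finset (Fin n)}
    (hmax : IsMaxCliqueIn S (R ×ˢ C)) (y : Fin n) (hy : ∀ x ∈ R, (x, y) ∈ S) : y ∈ C := by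
  obtain ⟨⟨hne, hsub, -⟩, hm⟩ := hmax
  have hRne : R.Nonempty := by
    obtain ⟨⟨a, b⟩, hab⟩ := hne
    exact ⟨a, (Finset.mem_product.1 hab).1⟩
  have hclique : IsCliqueIn S (R ×ˢ (insert y C)) := by
    refine ⟨?_, ?_, R, insert y C, rfl⟩
    · obtain ⟨a, ha⟩ := hRne
      exact ⟨(a, y), Finset.mem_product.2 ⟨ha, Finset.mem_insert_self y C⟩⟩
    · intro ⟨a, b⟩ hab
      rw [Finset.mem_product] at hab
      rcases Finset.mem_insert.1 hab.2 with rfl | hb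
      · exact hy a hab.1
      · exact hsub (Finset.mem_product.2 ⟨hab.1, hb⟩)
  have heq := hm _ hclique (Finset.product_subset_product le_rfl (Finset.subset_insert y C))
  obtain ⟨a, ha⟩ := hRne
  have : (a, y) ∈ R ×ˢ C := heq ▸ Finset.mem_product.2 ⟨ha, Finset.mem_insert_self y C⟩
  exact (Finset.mem_product.1 this).2

lemma product_inter_product {R R' : Finset (Fin m)} {C C' : Finset (Fin n)} :
    (R ×ˢ C) ∩ (R' ×ˢ C') = (R ∩ R') ×ˢ (C ∩ C') := by
  ext ⟨a, b⟩
  simp only [Finset.mem_inter, Finset.mem_product]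
  tauto

section Square

variable {S : Finset (Fin m × Fin n)} {A1 : Finset (Fin m)} {B0 : Finset (Fin n)}

lemma square_core
    (hG2 : ¬ HasInducedCopy doubleSquare (graphOf S))
    (hmax : ∀ C', IsPairIntersection S C' → A1 ×ˢ B0 ⊆ C' → A1 ×ˢ B0 = C')
    (hCne : (A1 ×ˢ B0).Nonempty)
    {RD RE : Finset (Fin m)} {CD CE : Finset (Fin n)}
    (hD : IsMaxCliqueIn S (RD ×ˢ CD)) (hE : IsMaxCliqueIn S (RE ×ˢ CE))
    (hA1 : A1 = RD ∩ RE) (hB0 : B0 = CD ∩ CE)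
    {i1 i2 : Fin m} {j j1 : Fin n}
    (hi1 : i1 ∈ A1) (hj : j ∈ B0) (hj1 : j1 ∉ B0) (hi2d : i2 ∉ RD)
    (e1 : (i1, j1) ∈ S) (e2 : (i2, j1) ∈ S) (e3 : (i2, j) ∈ S) : False := by
  have hi1D : i1 ∈ RD := by rw [hA1] at hi1; exact (Finset.mem_inter.1 hi1).1
  have hi1E : i1 ∈ RE := by rw [hA1] at hi1; exact (Finset.mem_inter.1 hi1).2
  have hjD : j ∈ CD := by rw [hB0] at hj; exact (Finset.mem_inter.1 hj).1
  have hjE : j ∈ CE := by rw [hB0] at hj; exact (Finset.mem_inter.1 hj).2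
  have hDsub : RD ×ˢ CD ⊆ S := hD.1.2.1
  have hEsub : RE ×ˢ CE ⊆ S := hE.1.2.1
  have eDS : ∀ x ∈ RD, ∀ y ∈ CD, (x, y) ∈ S := fun x hx y hy =>
    hDsub (Finset.mem_product.2 ⟨hx, hy⟩)
  have eES : ∀ x ∈ RE, ∀ y ∈ CE, (x, y) ∈ S := fun x hx y hy =>
    hEsub (Finset.mem_product.2 ⟨hx, hy⟩)
  have e4 : (i1, j) ∈ S := eDS i1 hi1D j hjD
  by_cases hj1D : j1 ∈ CD
  · have hj1E : j1 ∉ CE := fun h => hj1 (hB0 ▸ Finset.mem_inter.2 ⟨hj1D, h⟩)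
    by_cases hi2E : i2 ∈ RE
    · -- build a maximal clique G ⊇ (insert i2 A1) ×ˢ (insert j1 B0) and contradict hmax
      have hQ : IsCliqueIn S ((insert i2 A1) ×ˢ (insert j1 B0)) := by
        refine ⟨⟨(i2, j1), Finset.mem_product.2 ⟨Finset.mem_insert_self _ _,
          Finset.mem_insert_self _ _⟩⟩, ?_, _, _, rfl⟩
        intro ⟨x, y⟩ hxy
        rw [Finset.mem_product] at hxy
        rcases Finset.mem_insert.1 hxy.1 with rfl | hx <;>
          rcases Finset.mem_insert.1 hxy.2 with rfl | hy
        · exact e2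
        · exact eES x hi2E y (by rw [hB0] at hy; exact (Finset.mem_inter.1 hy).2)
        · exact eDS x (by rw [hA1] at hx; exact (Finset.mem_inter.1 hx).1) y hj1D
        · exact eDS x (by rw [hA1] at hx; exact (Finset.mem_inter.1 hx).1) y
            (by rw [hB0] at hy; exact (Finset.mem_inter.1 hy).1)
      obtain ⟨G, hQG, hGmax⟩ := exists_maxclique hQ
      have hGneD : RD ×ˢ CD ≠ G := by
        intro h
        have : (i2, j) ∈ G := hQG (Finset.mem_product.2 ⟨Finset.mem_insert_self _ _,
          Finset.mem_insert_of_mem hj⟩)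
        rw [← h, Finset.mem_product] at this
        exact hi2d this.1
      have hCsub : A1 ×ˢ B0 ⊆ (RD ×ˢ CD) ∩ G := by
        intro ⟨x, y⟩ hxy
        rw [Finset.mem_product] at hxy
        refine Finset.mem_inter.2 ⟨Finset.mem_product.2
          ⟨by rw [hA1] at hxy; exact (Finset.mem_inter.1 hxy.1).1,
           by rw [hB0] at hxy; exact (Finset.mem_inter.1 hxy.2).1⟩, ?_⟩
        exact hQG (Finset.mem_product.2 ⟨Finset.mem_insert_of_mem hxy.1,
          Finset.mem_insert_of_mem hxy.2⟩)
      have hpair : IsPairIntersection S ((RD ×ˢ CD) ∩ G) := by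
        refine ⟨RD ×ˢ CD, G, hD, hGmax, hGneD, rfl, ?_⟩
        exact hCne.mono hCsub
      have heq := hmax _ hpair hCsub
      have : (i1, j1) ∈ (RD ×ˢ CD) ∩ G := Finset.mem_inter.2
        ⟨Finset.mem_product.2 ⟨hi1D, hj1D⟩,
         hQG (Finset.mem_product.2 ⟨Finset.mem_insert_of_mem hi1, Finset.mem_insert_self _ _⟩)⟩
      rw [← heq, Finset.mem_product] at this
      exact hj1 this.2
    · -- double square with E
      have h1 : ¬ ∀ x ∈ RE, (x, j1) ∈ S := fun h => hj1E (col_mem_of_max hE j1 h)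
      push_neg at h1
      obtain ⟨iE, hiE, neE⟩ := h1
      have h2 : ¬ ∀ y ∈ CE, (i2, y) ∈ S := fun h => hi2E (row_mem_of_max hE i2 h)
      push_neg at h2
      obtain ⟨j'', hj'', ne2⟩ := h2
      refine ds_free hG2 iE i1 i2 j'' j j1 ?_ ?_ ?_ ?_ ?_ ?_ ?_ ?_ ?_ ?_ ?_ ?_ ?_ ?_ ?_
      · rintro rfl; exact neE e1
      · rintro rfl; exact neE e2
      · rintro rfl; exact hi2E hi1E
      · rintro rfl; exact ne2 e3
      · rintro rfl; exact ne2 e2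
      · rintro rfl; exact hj1 hj
      · exact eES iE hiE j'' hj''
      · exact eES iE hiE j hjE
      · exact eES i1 hi1E j'' hj''
      · exact e4
      · exact e1
      · exact e3
      · exact e2
      · exact neE
      · exact ne2
  · -- double square with D
    have h1 : ¬ ∀ x ∈ RD, (x, j1) ∈ S := fun h => hj1D (col_mem_of_max hD j1 h)
    push_neg at h1
    obtain ⟨iD, hiD, neD⟩ := h1
    have h2 : ¬ ∀ y ∈ CD, (i2, y) ∈ S := fun h => hi2d (row_mem_of_max hD i2 h)
    push_neg at h2
    obtain ⟨j', hj', ne2⟩ := h2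
    refine ds_free hG2 iD i1 i2 j' j j1 ?_ ?_ ?_ ?_ ?_ ?_ ?_ ?_ ?_ ?_ ?_ ?_ ?_ ?_ ?_
    · rintro rfl; exact neD e1
    · rintro rfl; exact neD e2
    · rintro rfl; exact hi2d hi1D
    · rintro rfl; exact ne2 e3
    · rintro rfl; exact ne2 e2
    · rintro rfl; exact hj1 hj
    · exact eDS iD hiD j' hj'
    · exact eDS iD hiD j hjD
    · exact eDS i1 hi1D j' hj'
    · exact e4
    · exact e1
    · exact e3
    · exact e2
    · exact neD
    · exact ne2

lemma square
    (hG2 : ¬ HasInducedCopy doubleSquare (graphOf S))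
    (hC : IsMaxIntersection S (A1 ×ˢ B0))
    {i1 i2 : Fin m} {j j1 : Fin n}
    (hi1 : i1 ∈ A1) (hj : j ∈ B0) (hj1 : j1 ∉ B0) (hi2 : i2 ∉ A1)
    (e1 : (i1, j1) ∈ S) (e2 : (i2, j1) ∈ S) (e3 : (i2, j) ∈ S) : False := by
  obtain ⟨⟨D, E, hD, hE, hDE, hCeq, hCne⟩, hmax⟩ := hC
  obtain ⟨RD, CD, rfl⟩ := hD.1.2.2
  obtain ⟨RE, CE, rfl⟩ := hE.1.2.2
  rw [product_inter_product] at hCeq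
  obtain ⟨hA1, hB0⟩ := prod_eq_prod hCeq (hCeq ▸ hCne)
  have : i2 ∉ RD ∨ i2 ∉ RE := by
    by_contra h
    push_neg at h
    exact hi2 (hA1 ▸ Finset.mem_inter.2 ⟨h.1, h.2⟩)
  rcases this with h | h
  · exact square_core hG2 hmax (hCeq ▸ hCne) hD hE hA1 hB0 hi1 hj hj1 h e1 e2 e3
  · exact square_core hG2 hmax (hCeq ▸ hCne) hE hD (hA1.trans (Finset.inter_comm _ _))
      (hB0.trans (Finset.inter_comm _ _)) hi1 hj hj1 h e1 e2 e3

end Square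

lemma no_long_cycle {S : Finset (Fin m × Fin n)}
    (hG1 : ∀ ℓ : ℕ, 6 ≤ ℓ → ¬ HasInducedCopy (cycleGraph ℓ) (graphOf S))
    {l : ℕ} (hl : 3 ≤ l) (r : ℕ → Fin m) (c : ℕ → Fin n)
    (hr : ∀ a b, a < l → b < l → r a = r b → a = b)
    (hc : ∀ a b, a < l → b < l → c a = c b → a = b)
    (he : ∀ a b, a < l → b < l →
      ((r a, c b) ∈ S ↔ (b = a ∨ b = a + 1 ∨ (a = l - 1 ∧ b = 0)))) : False := by
  haveI : NeZero (2*l) := ⟨by omega⟩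
  haveI : Fact (1 < 2*l) := ⟨by omega⟩
  apply hG1 (2*l) (by omega)
  have hvlt : ∀ t : ZMod (2*l), t.val < 2*l := fun t => ZMod.val_lt t
  have hvinj : ∀ u v : ZMod (2*l), u.val = v.val → u = v :=
    fun u v h => ZMod.val_injective (2*l) h
  have key : ∀ u v : ZMod (2*l), v = u + 1 ↔
      (v.val = u.val + 1 ∨ (u.val = 2*l-1 ∧ v.val = 0)) := by
    intro u v
    have h2 := hvlt u
    have h1 : (u + 1).val = (u.val + 1) % (2*l) := by
      rw [ZMod.val_add, ZMod.val_one]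
    have h3 : (u + 1).val = u.val + 1 ∨ (u.val = 2*l - 1 ∧ (u+1).val = 0) := by
      rcases Nat.lt_or_ge (u.val + 1) (2*l) with hlt | hge
      · left; rw [h1, Nat.mod_eq_of_lt hlt]
      · right
        have he2 : u.val + 1 = 2*l := by omega
        exact ⟨by omega, by rw [h1, he2, Nat.mod_self]⟩
    constructor
    · rintro rfl; exact h3
    · intro h
      have h4 := hvlt (u + 1)
      have h5 := hvlt v
      apply hvinj
      show v.val = (u + 1).val
      omega
  have hadj : ∀ u v : ZMod (2*l), (cycleGraph (2*l)).Adj u v ↔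
      (u.val ≠ v.val ∧ (v.val = u.val + 1 ∨ u.val = v.val + 1 ∨
        (u.val = 2*l-1 ∧ v.val = 0) ∨ (v.val = 2*l-1 ∧ u.val = 0))) := by
    intro u v
    simp only [cycleGraph, SimpleGraph.fromRel_adj]
    constructor
    · rintro ⟨hne, h | h⟩
      · refine ⟨fun hh => hne (hvinj _ _ hh), ?_⟩
        rcases (key u v).1 h with h' | h'
        · exact Or.inl h'
        · exact Or.inr (Or.inr (Or.inl h'))
      · refine ⟨fun hh => hne (hvinj _ _ hh), ?_⟩
        rcases (key v u).1 h with h' | h'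
        · exact Or.inr (Or.inl h')
        · exact Or.inr (Or.inr (Or.inr h'))
    · rintro ⟨hne, h⟩
      refine ⟨fun hh => hne (congrArg ZMod.val hh), ?_⟩
      rcases h with h | h | h | h
      · exact Or.inl ((key u v).2 (Or.inl h))
      · exact Or.inr ((key v u).2 (Or.inl h))
      · exact Or.inl ((key u v).2 (Or.inr h))
      · exact Or.inr ((key v u).2 (Or.inr h))
  classical
  set f : ZMod (2*l) → Fin m ⊕ Fin n := fun t => if t.val % 2 = 0 then inl (r (t.val / 2))
      else inr (c (if t.val = 2*l - 1 then 0 else (t.val + 1) / 2)) with hf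
  have hfe : ∀ t : ZMod (2*l), t.val % 2 = 0 → f t = inl (r (t.val / 2)) := by
    intro t ht; rw [hf]; simp only [if_pos ht]
  have hfo : ∀ t : ZMod (2*l), ¬ (t.val % 2 = 0) →
      f t = inr (c (if t.val = 2*l - 1 then 0 else (t.val + 1) / 2)) := by
    intro t ht; rw [hf]; simp only [if_neg ht]
  refine ⟨f, ?_, ?_⟩
  · intro u v h
    have hu := hvlt u; have hv := hvlt v
    by_cases hx : u.val % 2 = 0 <;> by_cases hy : v.val % 2 = 0
    · rw [hfe u hx, hfe v hy] at h
      have : r (u.val / 2) = r (v.val / 2) := by injection h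
      have := hr _ _ (by omega) (by omega) this
      apply hvinj; omega
    · rw [hfe u hx, hfo v hy] at h; exact absurd h (by simp)
    · rw [hfo u hx, hfe v hy] at h; exact absurd h (by simp)
    · rw [hfo u hx, hfo v hy] at h
      have hcc : c (if u.val = 2*l - 1 then 0 else (u.val + 1) / 2) =
          c (if v.val = 2*l - 1 then 0 else (v.val + 1) / 2) := by injection h
      apply hvinj
      by_cases h1 : u.val = 2*l - 1 <;> by_cases h2 : v.val = 2*l - 1
      · omega
      · rw [if_pos h1, if_neg h2] at hcc
        have := hc _ _ (by omega) (by omega) hcc; omega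
      · rw [if_neg h1, if_pos h2] at hcc
        have := hc _ _ (by omega) (by omega) hcc; omega
      · rw [if_neg h1, if_neg h2] at hcc
        have := hc _ _ (by omega) (by omega) hcc; omega
  · intro u v
    rw [hadj]
    have hu := hvlt u; have hv := hvlt v
    by_cases hx : u.val % 2 = 0 <;> by_cases hy : v.val % 2 = 0
    · rw [hfe u hx, hfe v hy]
      exact iff_of_false (by omega) graphOf_not_adj_inl_inl
    · rw [hfe u hx, hfo v hy, graphOf_adj_inl_inr]
      by_cases h2 : v.val = 2*l - 1
      · rw [if_pos h2, he _ _ (by omega) (by omega)]; omega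
      · rw [if_neg h2, he _ _ (by omega) (by omega)]; omega
    · rw [hfo u hx, hfe v hy, graphOf_adj_inr_inl]
      by_cases h1 : u.val = 2*l - 1
      · rw [if_pos h1, he _ _ (by omega) (by omega)]; omega
      · rw [if_neg h1, he _ _ (by omega) (by omega)]; omega
    · rw [hfo u hx, hfo v hy]
      exact iff_of_false (by omega) graphOf_not_adj_inr_inr

section Layers

variable {S : Finset (Fin m × Fin n)} {A : ℕ → Finset (Fin m)} {B : ℕ → Finset (Fin n)}

lemma stepA (hB : ∀ k, 1 ≤ k →
      B k = Finset.univ.filter fun j => j ∉ B (k - 1) ∧ ∃ i ∈ A k, (i, j) ∈ S)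
    {k : ℕ} (hk : 1 ≤ k) {i : Fin m} {j : Fin n} (hik : i ∈ A k) (hij : (i, j) ∈ S) :
    j ∈ B (k - 1) ∨ j ∈ B k := by
  by_cases h : j ∈ B (k - 1)
  · exact Or.inl h
  · refine Or.inr ?_
    rw [hB k hk]
    simp only [Finset.mem_filter, Finset.mem_univ, true_and]
    exact ⟨h, i, hik, hij⟩

lemma stepB (hA : ∀ k, 2 ≤ k →
      A k = Finset.univ.filter fun i => i ∉ A (k - 1) ∧ ∃ j ∈ B (k - 1), (i, j) ∈ S)
    {k : ℕ} (hk : 1 ≤ k) {i : Fin m} {j : Fin n} (hjk : j ∈ B k) (hij : (i, j) ∈ S) :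
    i ∈ A k ∨ i ∈ A (k + 1) := by
  by_cases h : i ∈ A k
  · exact Or.inl h
  · refine Or.inr ?_
    rw [hA (k + 1) (by omega)]
    simp only [Finset.mem_filter, Finset.mem_univ, true_and, Nat.add_sub_cancel]
    exact ⟨h, j, hjk, hij⟩

lemma layers_disjoint
    (hG : DoublyChordalBipartite (graphOf S))
    (hC : IsMaxIntersection S (A 1 ×ˢ B 0))
    (hA : ∀ k, 2 ≤ k →
      A k = Finset.univ.filter fun i => i ∉ A (k - 1) ∧ ∃ j ∈ B (k - 1), (i, j) ∈ S)
    (hB : ∀ k, 1 ≤ k →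
      B k = Finset.univ.filter fun j => j ∉ B (k - 1) ∧ ∃ i ∈ A k, (i, j) ∈ S) :
    ∀ l, (∀ k i, 1 ≤ k → k < l → i ∈ A k → i ∈ A l → False) ∧
         (∀ k j, k < l → j ∈ B k → j ∈ B l → False) := by
  have hCsubS : ∀ i ∈ A 1, ∀ j ∈ B 0, (i, j) ∈ S := by
    obtain ⟨⟨D, E, hD, hE, hDE, hCeq, hCne⟩, -⟩ := hC
    intro i hi j hj
    have : (i, j) ∈ A 1 ×ˢ B 0 := Finset.mem_product.2 ⟨hi, hj⟩
    rw [hCeq] at this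
    exact hD.1.2.1 (Finset.mem_inter.1 this).1
  intro l
  induction l using Nat.strong_induction_on with
  | _ l IH =>
  have hDA : ∀ k i, 1 ≤ k → k < l → i ∈ A k → i ∈ A l → False := by
    intro k i hk hkl hik hil
    have hl2 : 2 ≤ l := by omega
    rw [hA l hl2] at hil
    simp only [Finset.mem_filter, Finset.mem_univ, true_and] at hil
    obtain ⟨hnotA, jx, hjB, hij⟩ := hil
    by_cases hadj : l = k + 1
    · rw [hadj] at hnotA
      simp only [Nat.add_sub_cancel] at hnotA
      exact hnotA hik
    · rcases stepA hB hk hik hij with hj | hj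
      · exact (IH (l-1) (by omega)).2 (k-1) jx (by omega) hj (by
          have : l - 1 = l - 1 := rfl
          exact hjB)
      · exact (IH (l-1) (by omega)).2 k jx (by omega) hj hjB
  refine ⟨hDA, ?_⟩
  have hDB1 : ∀ k j, 1 ≤ k → k < l → j ∈ B k → j ∈ B l → False := by
    intro k jx hk hkl hjk hjl
    have hl1 : 1 ≤ l := by omega
    rw [hB l hl1] at hjl
    simp only [Finset.mem_filter, Finset.mem_univ, true_and] at hjl
    obtain ⟨hnotB, ix, hiA, hij⟩ := hjl
    by_cases hadj : l = k + 1
    · rw [hadj] at hnotB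
      simp only [Nat.add_sub_cancel] at hnotB
      exact hnotB hjk
    · rcases stepB hA hk hjk hij with hi | hi
      · exact hDA k ix hk hkl hi hiA
      · exact hDA (k+1) ix (by omega) (by omega) hi hiA
  intro k jx hkl hjk hjl
  rcases Nat.eq_zero_or_pos k with rfl | hk
  swap
  · exact hDB1 k jx hk hkl hjk hjl
  -- the hard case : jx ∈ B 0 ∩ B l
  have hl1 : 1 ≤ l := by omega
  have hjl' := hjl
  rw [hB l hl1] at hjl'
  simp only [Finset.mem_filter, Finset.mem_univ, true_and] at hjl'
  obtain ⟨hjnotB, il, hilA, hilj⟩ := hjl'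
  by_cases hl2 : l = 1
  · rw [hl2] at hjnotB
    simp only [Nat.sub_self] at hjnotB
    exact hjnotB hjk
  by_cases hl3 : l = 2
  · -- use the square lemma
    rw [hl3] at hilA
    rw [hA 2 (by omega)] at hilA
    simp only [Finset.mem_filter, Finset.mem_univ, true_and] at hilA
    obtain ⟨hilnotA, j1, hj1B, hilj1⟩ := hilA
    norm_num at hilnotA hj1B ⊢
    have hj1B' := hj1B
    rw [hB 1 (by omega)] at hj1B'
    simp only [Finset.mem_filter, Finset.mem_univ, true_and] at hj1B'
    obtain ⟨hj1notB, i1, hi1A, hi1j1⟩ := hj1B'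
    norm_num at hj1notB
    exact square hG.2 hC hi1A hjk hj1notB hilnotA hi1j1 hilj1 hilj
  -- now l ≥ 3 : build the chain and the induced cycle
  have hl3' : 3 ≤ l := by omega
  have hAinj : ∀ k k', 1 ≤ k → k < k' → k' ≤ l → ∀ i, i ∈ A k → i ∈ A k' → False := by
    intro k k' h1 h2 h3 i hik hik'
    rcases eq_or_lt_of_le h3 with rfl | hlt
    · exact hDA k i h1 h2 hik hik'
    · exact (IH k' hlt).1 k i h1 h2 hik hik'
  have hBinj : ∀ k k', k < k' → k' < l → ∀ y, y ∈ B k → y ∈ B k' → False := by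
    intro k k' h2 h3 y hyk hyk'
    exact (IH k' h3).2 k y h2 hyk hyk'
  -- build the chain down from level l
  have hchain : ∀ d, d < l → ∃ (ii : ℕ → Fin m) (jj : ℕ → Fin n),
      (∀ s, l - d ≤ s → s ≤ l → ii s ∈ A s) ∧
      (∀ s, l - d ≤ s → s < l → jj s ∈ B s) ∧
      ((ii l, jx) ∈ S) ∧
      (∀ s, l - d ≤ s → s < l → (ii (s+1), jj s) ∈ S) ∧
      (∀ s, l - d ≤ s → s < l → (ii s, jj s) ∈ S) := by
    intro d
    induction d with
    | zero =>
      intro _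
      refine ⟨fun _ => il, fun _ => jx, ?_, ?_, hilj, ?_, ?_⟩
      · intro s hs1 hs2
        have : s = l := by omega
        rw [this]; exact hilA
      · intro s hs1 hs2; omega
      · intro s hs1 hs2; omega
      · intro s hs1 hs2; omega
    | succ d ihd =>
      intro hdl
      obtain ⟨ii, jj, h1, h2, h3, h4, h5⟩ := ihd (by omega)
      have ht1 : l - (d+1) + 1 = l - d := by omega
      set t := l - (d+1) with hts
      have htpos : 1 ≤ t := by omega
      have htl : t + 1 ≤ l := by omega
      have hiit : ii (t+1) ∈ A (t+1) := h1 (t+1) (by omega) (by omega)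
      have h2t : 2 ≤ t + 1 := by omega
      rw [hA (t+1) h2t] at hiit
      simp only [Finset.mem_filter, Finset.mem_univ, true_and, Nat.add_sub_cancel] at hiit
      obtain ⟨-, jnew, hjnewB, enew⟩ := hiit
      have hjnewB' := hjnewB
      rw [hB t htpos] at hjnewB'
      simp only [Finset.mem_filter, Finset.mem_univ, true_and] at hjnewB'
      obtain ⟨-, inew, hinewA, e2⟩ := hjnewB'
      refine ⟨Function.update ii t inew, Function.update jj t jnew, ?_, ?_, ?_, ?_, ?_⟩
      · intro s hs1 hs2
        rcases eq_or_lt_of_le hs1 with rfl | hs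
        · rw [Function.update_self]; exact hinewA
        · rw [Function.update_of_ne (by omega)]; exact h1 s (by omega) hs2
      · intro s hs1 hs2
        rcases eq_or_lt_of_le hs1 with rfl | hs
        · rw [Function.update_self]; exact hjnewB
        · rw [Function.update_of_ne (by omega)]; exact h2 s (by omega) hs2
      · rw [Function.update_of_ne (by omega)]; exact h3
      · intro s hs1 hs2
        rcases eq_or_lt_of_le hs1 with rfl | hs
        · rw [Function.update_of_ne (by omega), Function.update_self]; exact enew
        · rw [Function.update_of_ne (by omega), Function.update_of_ne (by omega)]
          exact h4 s (by omega) hs2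
      · intro s hs1 hs2
        rcases eq_or_lt_of_le hs1 with rfl | hs
        · rw [Function.update_self, Function.update_self]; exact e2
        · rw [Function.update_of_ne (by omega), Function.update_of_ne (by omega)]
          exact h5 s (by omega) hs2
  obtain ⟨ii, jj, h1, h2, h3, h4, h5⟩ := hchain (l-1) (by omega)
  have hll : l - (l-1) = 1 := by omega
  rw [hll] at h1 h2 h4 h5
  classical
  apply no_long_cycle hG.1 hl3' (fun a => ii (a+1)) (fun b => if b = 0 then jx else jj b)
  · -- injectivity of rows
    intro a b ha hb hab
    by_contra hne
    rcases Nat.lt_or_ge a b with h | h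
    · exact hAinj (a+1) (b+1) (by omega) (by omega) (by omega) _
        (h1 (a+1) (by omega) (by omega)) (hab ▸ h1 (b+1) (by omega) (by omega))
    · exact hAinj (b+1) (a+1) (by omega) (by omega) (by omega) _
        (h1 (b+1) (by omega) (by omega)) (hab ▸ h1 (a+1) (by omega) (by omega))
  · -- injectivity of columns
    intro a b ha hb hab
    by_contra hne
    rcases Nat.eq_zero_or_pos a with rfl | hapos <;> rcases Nat.eq_zero_or_pos b with rfl | hbpos
    · omega
    · rw [if_pos rfl, if_neg (by omega)] at hab
      exact hBinj 0 b hbpos (by omega) jx hjk (hab ▸ h2 b hbpos hb)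
    · rw [if_neg (by omega), if_pos rfl] at hab
      exact hBinj 0 a hapos (by omega) jx hjk (hab ▸ h2 a hapos ha)
    · rw [if_neg (by omega), if_neg (by omega)] at hab
      rcases Nat.lt_or_ge a b with h | h
      · exact hBinj a b h (by omega) _ (h2 a hapos ha) (hab ▸ h2 b hbpos hb)
      · exact hBinj b a (by omega) (by omega) _ (h2 b hbpos hb) (hab ▸ h2 a hapos ha)
  · -- edge pattern
    intro a b ha hb
    constructor
    · intro hedge
      have hAa : ii (a+1) ∈ A (a+1) := h1 (a+1) (by omega) (by omega)
      by_contra hpat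
      push_neg at hpat
      obtain ⟨hp1, hp2, hp3⟩ := hpat
      rcases Nat.eq_zero_or_pos b with rfl | hbpos
      · rw [if_pos rfl] at hedge
        rcases stepA hB (by omega : 1 ≤ a + 1) hAa hedge with hj | hj
        · simp only [Nat.add_sub_cancel] at hj
          rcases Nat.eq_zero_or_pos a with rfl | hapos
          · exact hp1 rfl
          · exact hBinj 0 a hapos (by omega) jx hjk hj
        · by_cases hal : a + 1 = l
          · exact hp3 (by omega) rfl
          · exact hBinj 0 (a+1) (by omega) (by omega) jx hjk hj
      · rw [if_neg (by omega)] at hedge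
        have hjb : jj b ∈ B b := h2 b hbpos hb
        rcases stepA hB (by omega : 1 ≤ a + 1) hAa hedge with hj | hj
        · simp only [Nat.add_sub_cancel] at hj
          rcases Nat.lt_or_ge b a with h | h
          · exact hBinj b a h (by omega) _ hjb hj
          · rcases Nat.lt_or_ge a b with h' | h'
            · exact hBinj a b h' (by omega) _ hj hjb
            · exact hp1 (by omega)
          -- b vs a
        · by_cases hba : b = a + 1
          · exact hp2 hba
          · by_cases hal : a + 1 = l
            · rw [hal] at hj
              exact hDB1 b (jj b) hbpos (by omega) hjb hj
            · rcases Nat.lt_or_ge b (a+1) with h | h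
              · exact hBinj b (a+1) h (by omega) _ hjb hj
              · exact hBinj (a+1) b (by omega) (by omega) _ hj hjb
    · intro hpat
      rcases Nat.eq_zero_or_pos b with rfl | hbpos
      · rw [if_pos rfl]
        rcases hpat with h0 | h0 | ⟨h0, -⟩
        · rw [← h0]
          exact hCsubS _ (h1 1 le_rfl (by omega)) _ hjk
        · omega
        · rw [h0]
          have heq : (l - 1) + 1 = l := by omega
          rw [heq]
          exact h3
      · rw [if_neg (by omega)]
        rcases hpat with h0 | h0 | ⟨-, h0⟩
        · rw [← h0]
          exact h4 b hbpos hb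
        · rw [h0]
          exact h5 (a+1) (by omega) (by omega)
        · omega

end Layers


/-- Let `G_S` be doubly chordal bipartite and `C = A 1 ×ˢ B 0 ∈ Int(S)`, with
the sets `A k` (for `k ≥ 2`) and `B k` (for `k ≥ 1`) defined by the recursions of the paper.
Then `A k` and `B k` are empty for all sufficiently large `k`, and the indicator vector of `C`
satisfies `𝟙_C = Σ_{k ≥ 1} (Σ_{i ∈ A k} a_i − Σ_{j ∈ B k} b_j)` in `ℝ^S`, where `a_i` and `b_j`
are the rows of the matrix `A_S`. -/
theorem stmt13 {m n : ℕ} (S : Finset (Fin m × Fin n))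
    (hG : DoublyChordalBipartite (graphOf S))
    (A : ℕ → Finset (Fin m)) (B : ℕ → Finset (Fin n))
    (hC : IsMaxIntersection S (A 1 ×ˢ B 0))
    (hA : ∀ k, 2 ≤ k →
      A k = Finset.univ.filter fun i => i ∉ A (k - 1) ∧ ∃ j ∈ B (k - 1), (i, j) ∈ S)
    (hB : ∀ k, 1 ≤ k →
      B k = Finset.univ.filter fun j => j ∉ B (k - 1) ∧ ∃ i ∈ A k, (i, j) ∈ S) :
    (∃ K, ∀ k, K ≤ k → A k = ∅ ∧ B k = ∅) ∧
    (fun p : Fin m × Fin n => if p ∈ A 1 ×ˢ B 0 then (1 : ℝ) else 0) =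
      ∑ᶠ k ∈ Set.Ici 1,
        ((∑ i ∈ A k, fun p : Fin m × Fin n => if p ∈ S ∧ p.1 = i then (1 : ℝ) else 0) -
         (∑ j ∈ B k, fun p : Fin m × Fin n => if p ∈ S ∧ p.2 = j then (1 : ℝ) else 0)) := by
  classical
  have hdis := layers_disjoint hG hC hA hB
  have hAdis : ∀ k k', 1 ≤ k → k < k' → ∀ i, i ∈ A k → i ∈ A k' → False :=
    fun k k' h1 h2 i => (hdis k').1 k i h1 h2
  have hBdis : ∀ k k', k < k' → ∀ j, j ∈ B k → j ∈ B k' → False :=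
    fun k k' h2 j => (hdis k').2 k j h2
  have hCsubS : ∀ i ∈ A 1, ∀ j ∈ B 0, (i, j) ∈ S := by
    obtain ⟨⟨D, E, hD, hE, hDE, hCeq, hCne⟩, -⟩ := hC
    intro i hi j hj
    have : (i, j) ∈ A 1 ×ˢ B 0 := Finset.mem_product.2 ⟨hi, hj⟩
    rw [hCeq] at this
    exact hD.1.2.1 (Finset.mem_inter.1 this).1
  -- existence of an empty level
  have hex : ∃ K, 1 ≤ K ∧ A K = ∅ := by
    by_contra h
    push_neg at h
    rcases Finset.eq_empty_or_nonempty (A 1) with h1 | h1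
    · exact (h 1 le_rfl).ne_empty h1
    obtain ⟨i0, -⟩ := h1
    have hne : ∀ k, k ∈ Finset.Icc 1 (m+1) → (A k).Nonempty := fun k hk =>
      (h k (Finset.mem_Icc.1 hk).1)
    set g : ℕ → Fin m := fun k => if hk : (A k).Nonempty then hk.choose else i0 with hg
    have hgmem : ∀ k, k ∈ Finset.Icc 1 (m+1) → g k ∈ A k := by
      intro k hk
      have h' := hne k hk
      rw [hg]
      simp only [dif_pos h']
      exact h'.choose_spec
    have hcard := Finset.card_le_card_of_injOn (s := Finset.Icc 1 (m+1))
      (t := (Finset.univ : Finset (Fin m))) g (fun a _ => Finset.mem_univ (g a)) ?_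
    · rw [Nat.card_Icc, Finset.card_univ, Fintype.card_fin] at hcard
      omega
    · intro a ha b hb hab
      by_contra hne'
      rcases Nat.lt_or_ge a b with h' | h'
      · exact hAdis a b (Finset.mem_Icc.1 ha).1 h' (g a) (hgmem a ha) (hab ▸ hgmem b hb)
      · exact hAdis b a (Finset.mem_Icc.1 hb).1 (by omega) (g b) (hgmem b hb)
          (hab ▸ hgmem a ha)
  obtain ⟨K, hK1, hKempty⟩ := hex
  have hempty : ∀ k, K ≤ k → A k = ∅ ∧ B k = ∅ := by
    intro k hk
    induction k, hk using Nat.le_induction with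
    | base =>
      refine ⟨hKempty, ?_⟩
      rw [hB K hK1]
      apply Finset.eq_empty_of_forall_notMem
      intro j hj
      simp only [Finset.mem_filter, Finset.mem_univ, true_and] at hj
      obtain ⟨-, i, hi, -⟩ := hj
      rw [hKempty] at hi
      exact absurd hi (Finset.notMem_empty i)
    | succ k hk ih =>
      obtain ⟨ihA, ihB⟩ := ih
      constructor
      · rw [hA (k+1) (by omega)]
        apply Finset.eq_empty_of_forall_notMem
        intro i hi
        simp only [Finset.mem_filter, Finset.mem_univ, true_and, Nat.add_sub_cancel] at hi
        obtain ⟨-, j, hj, -⟩ := hi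
        rw [ihB] at hj
        exact absurd hj (Finset.notMem_empty j)
      · rw [hB (k+1) (by omega)]
        apply Finset.eq_empty_of_forall_notMem
        intro j hj
        simp only [Finset.mem_filter, Finset.mem_univ, true_and] at hj
        obtain ⟨-, i, hi, -⟩ := hj
        have : A (k+1) = ∅ := by
          rw [hA (k+1) (by omega)]
          apply Finset.eq_empty_of_forall_notMem
          intro i' hi'
          simp only [Finset.mem_filter, Finset.mem_univ, true_and, Nat.add_sub_cancel] at hi'
          obtain ⟨-, j', hj', -⟩ := hi'
          rw [ihB] at hj'
          exact absurd hj' (Finset.notMem_empty j')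
        rw [this] at hi
        exact absurd hi (Finset.notMem_empty i)
  refine ⟨⟨K, hempty⟩, ?_⟩
  -- now the identity of functions
  set F : ℕ → ((Fin m × Fin n) → ℝ) := fun k =>
    ((∑ i ∈ A k, fun p : Fin m × Fin n => if p ∈ S ∧ p.1 = i then (1 : ℝ) else 0) -
     (∑ j ∈ B k, fun p : Fin m × Fin n => if p ∈ S ∧ p.2 = j then (1 : ℝ) else 0)) with hF
  have hFzero : ∀ k, K ≤ k → F k = 0 := by
    intro k hk
    obtain ⟨hAe, hBe⟩ := hempty k hk
    rw [hF]
    simp only [hAe, hBe, Finset.sum_empty, sub_zero]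
  have hfin : ∑ᶠ k ∈ Set.Ici 1, F k = ∑ k ∈ Finset.Icc 1 K, F k := by
    apply finsum_mem_eq_sum_of_inter_support_eq
    ext k
    simp only [Set.mem_inter_iff, Set.mem_Ici, Function.mem_support, Finset.coe_Icc,
      Set.mem_Icc]
    constructor
    · rintro ⟨h1, h2⟩
      refine ⟨⟨h1, ?_⟩, h2⟩
      by_contra h3
      exact h2 (hFzero k (by omega))
    · rintro ⟨⟨h1, -⟩, h2⟩
      exact ⟨h1, h2⟩
  rw [hfin]
  funext p
  rw [Finset.sum_apply]
  have hterm : ∀ k, F k p = (if p ∈ S ∧ p.1 ∈ A k then (1:ℝ) else 0) -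
      (if p ∈ S ∧ p.2 ∈ B k then (1:ℝ) else 0) := by
    intro k
    rw [hF]
    simp only [Pi.sub_apply, Finset.sum_apply]
    congr 1
    · by_cases hpS : p ∈ S
      · simp only [hpS, true_and]
        exact Finset.sum_ite_eq (A k) p.1 (fun _ => (1:ℝ))
      · simp only [hpS, false_and, if_false]
        exact Finset.sum_const_zero
    · by_cases hpS : p ∈ S
      · simp only [hpS, true_and]
        exact Finset.sum_ite_eq (B k) p.2 (fun _ => (1:ℝ))
      · simp only [hpS, false_and, if_false]
        exact Finset.sum_const_zero
  simp only [hterm]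
  by_cases hpS : p ∈ S
  swap
  · -- p ∉ S : everything is zero
    have hL : p ∉ A 1 ×ˢ B 0 := by
      intro hp
      rw [Finset.mem_product] at hp
      exact hpS (by
        have := hCsubS p.1 hp.1 p.2 hp.2
        simpa using this)
    simp only [if_neg hL, hpS, false_and, if_false]
    rw [Finset.sum_eq_zero]
    intro k _
    exact sub_self 0
  · simp only [hpS, true_and]
    -- main counting argument
    by_cases hiA : ∃ α, 1 ≤ α ∧ α ≤ K ∧ p.1 ∈ A α
    · obtain ⟨α, hα1, hαK, hαA⟩ := hiA
      have hS1 : ∑ k ∈ Finset.Icc 1 K, (if p.1 ∈ A k then (1:ℝ) else 0) = 1 := by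
        rw [Finset.sum_eq_single_of_mem α (Finset.mem_Icc.2 ⟨hα1, hαK⟩)]
        · rw [if_pos hαA]
        · intro k hk hne
          rw [if_neg]
          intro hkA
          rcases Nat.lt_or_ge k α with h' | h'
          · exact hAdis k α (Finset.mem_Icc.1 hk).1 h' p.1 hkA hαA
          · exact hAdis α k hα1 (by omega) p.1 hαA hkA
      rcases stepA hB hα1 hαA hpS with hj | hj
      all_goals rw [Finset.sum_sub_distrib, hS1]
      · -- p.2 ∈ B (α - 1)
        rcases Nat.eq_zero_or_pos (α - 1) with h0 | hpos
        · -- α = 1, p.2 ∈ B 0 : the indicator is 1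
          have hα1' : α = 1 := by omega
          rw [h0] at hj
          have hL : p ∈ A 1 ×ˢ B 0 := Finset.mem_product.2 ⟨by rwa [hα1'] at hαA, hj⟩
          rw [if_pos hL]
          have hS2 : ∑ k ∈ Finset.Icc 1 K, (if p.2 ∈ B k then (1:ℝ) else 0) = 0 := by
            apply Finset.sum_eq_zero
            intro k hk
            rw [if_neg]
            intro hkB
            exact hBdis 0 k (by have := Finset.mem_Icc.1 hk; omega) p.2 hj hkB
          rw [hS2]; ring
        · -- α ≥ 2, p.2 ∈ B (α - 1) with α - 1 ≥ 1
          have hL : p ∉ A 1 ×ˢ B 0 := by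
            intro hp
            exact hBdis 0 (α-1) hpos p.2 (Finset.mem_product.1 hp).2 hj
          rw [if_neg hL]
          have hS2 : ∑ k ∈ Finset.Icc 1 K, (if p.2 ∈ B k then (1:ℝ) else 0) = 1 := by
            have hmem : α - 1 ∈ Finset.Icc 1 K := Finset.mem_Icc.2 ⟨hpos, by omega⟩
            rw [Finset.sum_eq_single_of_mem (α-1) hmem]
            · rw [if_pos hj]
            · intro k hk hne
              rw [if_neg]
              intro hkB
              rcases Nat.lt_or_ge k (α-1) with h' | h'
              · exact hBdis k (α-1) h' p.2 hkB hj
              · exact hBdis (α-1) k (by omega) p.2 hj hkB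
          rw [hS2]; ring
      · -- p.2 ∈ B α
        have hL : p ∉ A 1 ×ˢ B 0 := by
          intro hp
          exact hBdis 0 α (by omega) p.2 (Finset.mem_product.1 hp).2 hj
        rw [if_neg hL]
        have hS2 : ∑ k ∈ Finset.Icc 1 K, (if p.2 ∈ B k then (1:ℝ) else 0) = 1 := by
          rw [Finset.sum_eq_single_of_mem α (Finset.mem_Icc.2 ⟨hα1, hαK⟩)]
          · rw [if_pos hj]
          · intro k hk hne
            rw [if_neg]
            intro hkB
            rcases Nat.lt_or_ge k α with h' | h'
            · exact hBdis k α h' p.2 hkB hj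
            · exact hBdis α k (by omega) p.2 hj hkB
        rw [hS2]; ring
    · -- p.1 in no level : p.2 in no level either, both sides zero
      push_neg at hiA
      have hL : p ∉ A 1 ×ˢ B 0 := by
        intro hp
        exact hiA 1 le_rfl hK1 (Finset.mem_product.1 hp).1
      rw [if_neg hL]
      rw [Finset.sum_eq_zero]
      intro k hk
      obtain ⟨hk1, hkK⟩ := Finset.mem_Icc.1 hk
      have hA0 : p.1 ∉ A k := fun h => hiA k hk1 hkK h
      rw [if_neg hA0]
      have hB0 : p.2 ∉ B k := by
        intro hkB
        rcases stepB hA hk1 hkB hpS with hi | hi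
        · exact hiA k hk1 hkK hi
        · -- p.1 ∈ A (k+1) : need k + 1 ≤ K
          by_cases hkK' : k + 1 ≤ K
          · exact hiA (k+1) (by omega) hkK' hi
          · have : k = K := by omega
            rw [this] at hkB
            rw [(hempty K le_rfl).2] at hkB
            exact absurd hkB (Finset.notMem_empty p.2)
      rw [if_neg hB0]
      ring
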